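/- A directed path in the expanded network G_E from a source node i^0 to a sink copy t^c (t a sink of G, c ≤ C_max) projects to a feasible walk in G from i to t with the same primary length and secondary cost c. If additionally every circuit of G with zero secondary cost has positive primary length, then a shortest such path in G_E projects to a simple path (not a proper walk) in G. -/

import Mathlib

def arcCost {V : Type*} (γ : V → V → ℤ) (p : List V) : ℤ :=
  ((p.zip p.tail).map fun q => γ q.1 q.2).sum

def IsWalk {V : Type*} (A : V → V → Prop) (i j : V) (p : List V) : Prop :=
  p.Chain' A ∧ p.head? = some i ∧ p.getLast? = some j

def IsPath {V : Type*} (A : V → V → Prop) (i j : V) (p : List V) : Prop :=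
  IsWalk A i j p ∧ p.Nodup

/-- A directed circuit: a walk of at least one arc whose first and last nodes coincide. -/
def IsCircuit {V : Type*} (A : V → V → Prop) (p : List V) : Prop :=
  p.Chain' A ∧ 2 ≤ p.length ∧ p.head? = p.getLast?
/-- Arcs of the expanded network `G_E`: node `(i,c)` (node `i` at secondary-cost level
`c`, `0 ≤ c`) is joined to `(j, c + σ i j)` whenever `(i,j)` is an arc of `G` and the
budget `Cmax` is not exceeded. -/
def ArcE {V : Type*} (A : V → V → Prop) (σ : V → V → ℤ) (Cmax : ℤ) :
    V × ℤ → V × ℤ → Prop :=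
  fun a b => A a.1 b.1 ∧ 0 ≤ a.2 ∧ b.2 = a.2 + σ a.1 b.1 ∧ b.2 ≤ Cmax

/-- Primary costs on the expanded network: an expanded arc inherits the cost of the
underlying arc. -/
def γE {V : Type*} (γ : V → V → ℤ) : V × ℤ → V × ℤ → ℤ :=
  fun a b => γ a.1 b.1

section Helpers
variable {V : Type*} {A : V → V → Prop} {γ σ : V → V → ℤ} {Cmax : ℤ}

@[simp] theorem List.chain'_nil {α : Type*} {R : α → α → Prop} : List.Chain' R [] :=
  List.IsChain.nil

@[simp] theorem List.chain'_singleton {α : Type*} {R : α → α → Prop} (a : α) :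
    List.Chain' R [a] :=
  List.IsChain.singleton a

@[simp] theorem List.chain'_cons {α : Type*} {R : α → α → Prop} {x y : α} {l : List α} :
    List.Chain' R (x :: y :: l) ↔ R x y ∧ List.Chain' R (y :: l) :=
  List.isChain_cons_cons

theorem List.chain'_map {α β : Type*} {R : α → α → Prop} (f : β → α) {l : List β} :
    List.Chain' R (l.map f) ↔ List.Chain' (fun a b : β => R (f a) (f b)) l :=
  List.isChain_map f

theorem List.chain'_append {α : Type*} {R : α → α → Prop} {l₁ l₂ : List α} :
    List.Chain' R (l₁ ++ l₂) ↔
      List.Chain' R l₁ ∧ List.Chain' R l₂ ∧ ∀ x ∈ l₁.getLast?, ∀ y ∈ l₂.head?, R x y :=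
  List.isChain_append

lemma arcCost_nil : arcCost γ ([] : List V) = 0 := rfl

lemma arcCost_single (a : V) : arcCost γ [a] = 0 := rfl

lemma arcCost_cons (b : V) (l : List V) :
    arcCost γ (b :: l) = (l.head?.elim 0 (γ b)) + arcCost γ l := by
  cases l <;> simp [arcCost]

lemma arcCost_append (a : V) (l₂ : List V) : ∀ l₁ : List V,
    arcCost γ (l₁ ++ a :: l₂) = arcCost γ (l₁ ++ [a]) + arcCost γ (a :: l₂) := by
  intro l₁
  induction l₁ with
  | nil => simp [arcCost_single]
  | cons b l₁ ih =>
      rw [List.cons_append, arcCost_cons, List.cons_append, arcCost_cons (l := l₁ ++ [a]), ih]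
      have : (l₁ ++ a :: l₂).head? = (l₁ ++ [a]).head? := by cases l₁ <;> simp
      rw [this]; ring

lemma arcCost_proj (l : List (V × ℤ)) :
    arcCost (γE γ) l = arcCost γ (l.map Prod.fst) := by
  simp [arcCost, γE, ← List.map_tail, List.zip_map, List.map_map]
  rfl

lemma chain_proj {l : List (V × ℤ)} (h : List.Chain' (ArcE A σ Cmax) l) :
    List.Chain' A (l.map Prod.fst) := by
  rw [List.chain'_map]
  exact h.imp fun a b hab => hab.1

lemma chainE_mono (hσ : ∀ a b, A a b → 0 ≤ σ a b) :
    ∀ (l : List (V × ℤ)) (a : V × ℤ), List.Chain' (ArcE A σ Cmax) (a :: l) →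
      ∀ z ∈ l, a.2 ≤ z.2 := by
  intro l
  induction l with
  | nil => intro a _ z hz; simp at hz
  | cons b l ih =>
      intro a hch z hz
      rw [List.chain'_cons] at hch
      obtain ⟨hab, hch⟩ := hch
      have hab2 : a.2 ≤ b.2 := by
        have := hσ a.1 b.1 hab.1
        have := hab.2.2.1
        omega
      rcases List.mem_cons.mp hz with rfl | hz
      · exact hab2
      · exact le_trans hab2 (ih b hch z hz)

lemma chainE_nonneg (hσ : ∀ a b, A a b → 0 ≤ σ a b)
    {l : List (V × ℤ)} {a : V × ℤ} (hch : List.Chain' (ArcE A σ Cmax) (a :: l))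
    (h0 : 0 ≤ a.2) : ∀ z ∈ a :: l, 0 ≤ z.2 := by
  intro z hz
  rcases List.mem_cons.mp hz with rfl | hz
  · exact h0
  · exact le_trans h0 (chainE_mono hσ l a hch z hz)

lemma chainE_le_Cmax :
    ∀ (l : List (V × ℤ)) (a : V × ℤ), List.Chain' (ArcE A σ Cmax) (a :: l) →
      ∀ z ∈ l, z.2 ≤ Cmax := by
  intro l
  induction l with
  | nil => intro a _ z hz; simp at hz
  | cons b l ih =>
      intro a hch z hz
      rw [List.chain'_cons] at hch
      rcases List.mem_cons.mp hz with rfl | hz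
      · exact hch.1.2.2.2
      · exact ih b hch.2 z hz

lemma chainE_levels :
    ∀ (l : List (V × ℤ)) (a : V × ℤ), List.Chain' (ArcE A σ Cmax) (a :: l) →
      ((a :: l).getLast (by simp)).2 = a.2 + arcCost σ ((a :: l).map Prod.fst) := by
  intro l
  induction l with
  | nil => intro a _; simp [arcCost]
  | cons b l ih =>
      intro a hch
      rw [List.chain'_cons] at hch
      have h1 := ih b hch.2
      have h2 : arcCost σ ((a :: b :: l).map Prod.fst)
          = σ a.1 b.1 + arcCost σ ((b :: l).map Prod.fst) := by
        simp [arcCost]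
      rw [List.getLast_cons (by simp), h1, h2]
      have := hch.1.2.2.1
      omega

lemma shift_chain (δ : ℤ) (hδ : 0 ≤ δ) :
    ∀ l : List (V × ℤ), List.Chain' (ArcE A σ Cmax) l → (∀ z ∈ l, δ ≤ z.2) →
      List.Chain' (ArcE A σ Cmax) (l.map fun z => (z.1, z.2 - δ)) := by
  intro l
  induction l with
  | nil => intro _ _; simp
  | cons a l ih =>
      intro hch hmem
      cases l with
      | nil => simp
      | cons b l =>
          rw [List.chain'_cons] at hch
          rw [List.map_cons, List.map_cons, List.chain'_cons]
          constructor
          · obtain ⟨hA, h0, heq, hle⟩ := hch.1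
            have hda : δ ≤ a.2 := hmem a (by simp)
            exact ⟨hA, by simp; omega, by simp; omega, by simp; omega⟩
          · have := ih hch.2 (fun z hz => hmem z (List.mem_cons_of_mem _ hz))
            rw [List.map_cons] at this
            exact this

lemma exists_dup {α β : Type*} (f : α → β) :
    ∀ l : List α, ¬ (l.map f).Nodup →
      ∃ u x v y w, l = u ++ x :: v ++ y :: w ∧ f x = f y := by
  intro l
  induction l with
  | nil => intro h; simp at h
  | cons a l ih =>
      intro h
      rw [List.map_cons, List.nodup_cons] at h
      by_cases hnd : (l.map f).Nodup
      · have hmem : f a ∈ l.map f := by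
          by_contra hno; exact h ⟨hno, hnd⟩
        obtain ⟨b, hb, hfb⟩ := List.mem_map.mp hmem
        obtain ⟨v, w, rfl⟩ := List.append_of_mem hb
        exact ⟨[], a, v, b, w, by simp, hfb.symm⟩
      · obtain ⟨u, x, v, y, w, rfl, hxy⟩ := ih hnd
        exact ⟨a :: u, x, v, y, w, by simp, hxy⟩

lemma reduce (hσ : ∀ a b, A a b → 0 ≤ σ a b)
    (hcircγ : ∀ p, IsCircuit A p → 0 < arcCost γ p) (i : V) :
    ∀ n : ℕ, ∀ pE : List (V × ℤ), pE.length ≤ n →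
      List.Chain' (ArcE A σ Cmax) pE → pE.head? = some (i, 0) →
      ∀ tc : V × ℤ, pE.getLast? = some tc → ¬ (pE.map Prod.fst).Nodup →
      ∃ qE c', c' ≤ tc.2 ∧ IsPath (ArcE A σ Cmax) (i, 0) (tc.1, c') qE ∧
        arcCost (γE γ) qE < arcCost (γE γ) pE := by
  intro n
  induction n with
  | zero =>
      intro pE hlen hch hhead tc hlast hnd
      rw [List.length_eq_zero_iff.mp (Nat.le_zero.mp hlen)] at hhead
      simp at hhead
  | succ n ih =>
      intro pE hlen hch hhead tc hlast hnd
      obtain ⟨u, x, v, y, w, rfl, hxy⟩ := exists_dup Prod.fst pE hnd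
      -- decompose the chain
      have hsplit1 : u ++ x :: v ++ y :: w = u ++ (x :: (v ++ y :: w)) := by simp
      rw [hsplit1] at hch hhead hlast hlen hnd ⊢
      have hch0 := hch
      rw [List.chain'_append] at hch
      obtain ⟨hu, h2, hjoin⟩ := hch
      have h2' : List.Chain' (ArcE A σ Cmax) ((x :: v) ++ (y :: w)) := by
        simpa using h2
      rw [List.chain'_append] at h2'
      obtain ⟨hxv, hyw, hjoin2⟩ := h2'
      -- nonnegativity of levels
      have hnn : ∀ z ∈ u ++ (x :: (v ++ y :: w)), 0 ≤ z.2 := by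
        intro z hz
        obtain ⟨l', hl'⟩ : ∃ l', u ++ (x :: (v ++ y :: w)) = ((i, (0:ℤ)) : V × ℤ) :: l' := by
          cases hq : u ++ (x :: (v ++ y :: w)) with
          | nil => rw [hq] at hhead; simp at hhead
          | cons a l =>
              rw [hq] at hhead
              simp only [List.head?_cons, Option.some.injEq] at hhead
              exact ⟨l, by rw [hhead]⟩
        rw [hl'] at hch0 hz
        exact chainE_nonneg hσ hch0 (le_refl 0) z hz
      have hx0 : (0:ℤ) ≤ x.2 := hnn x (by simp)
      have hxy2 : x.2 ≤ y.2 := chainE_mono hσ _ x h2 y (by simp)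
      set δ : ℤ := y.2 - x.2 with hδdef
      have hδ : 0 ≤ δ := by omega
      set shift : V × ℤ → V × ℤ := fun z => (z.1, z.2 - δ) with hshiftdef
      have hshifty : shift y = x := by
        rw [hshiftdef]; ext
        · exact hxy.symm
        · simp; omega
      set pE' : List (V × ℤ) := u ++ (y :: w).map shift with hpE'def
      -- chain of the shifted suffix
      have hchW : List.Chain' (ArcE A σ Cmax) ((y :: w).map shift) := by
        apply shift_chain δ hδ (y :: w) hyw
        intro z hz
        rcases List.mem_cons.mp hz with rfl | hz
        · omega
        · have := chainE_mono hσ w y hyw z hz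
          omega
      have hch' : List.Chain' (ArcE A σ Cmax) pE' := by
        rw [hpE'def, List.chain'_append]
        refine ⟨hu, hchW, ?_⟩
        intro a ha b hb
        rw [List.map_cons, List.head?_cons, Option.mem_def, Option.some.injEq] at hb
        subst hb
        rw [hshifty]
        exact hjoin a ha x (by simp)
      -- head of pE'
      have hhead' : pE'.head? = some ((i, (0:ℤ)) : V × ℤ) := by
        rw [hpE'def]
        cases u with
        | nil =>
            simp only [List.nil_append, List.map_cons, List.head?_cons, hshifty]
            simpa using hhead
        | cons a u' =>
            simp only [List.cons_append, List.head?_cons] at hhead ⊢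
            exact hhead
      -- last of pE'
      have hlastyw : (y :: w).getLast? = some tc := by
        have : u ++ (x :: (v ++ y :: w)) = (u ++ x :: v) ++ (y :: w) := by simp
        rw [this, List.getLast?_append] at hlast
        cases hq : (y :: w).getLast? with
        | none => simp at hq
        | some b => rw [hq] at hlast; simpa using hlast
      have hlast' : pE'.getLast? = some ((tc.1, tc.2 - δ) : V × ℤ) := by
        rw [hpE'def, List.getLast?_append, List.getLast?_map, hlastyw]
        simp [hshiftdef]
      -- the removed circuit has positive cost
      have hcirc : IsCircuit A (x.1 :: (v.map Prod.fst ++ [y.1])) := by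
        refine ⟨?_, by simp, by
          rw [hxy, List.head?_cons,
            show y.1 :: (List.map Prod.fst v ++ [y.1]) = (y.1 :: List.map Prod.fst v) ++ [y.1] from rfl,
            List.getLast?_concat]⟩
        have hcE : List.Chain' (ArcE A σ Cmax) ((x :: v) ++ [y]) := by
          rw [List.chain'_append]
          refine ⟨hxv, by simp, ?_⟩
          intro a ha b hb
          simp only [List.head?_cons, Option.mem_def, Option.some.injEq] at hb
          subst hb
          exact hjoin2 a ha y (by simp)
        have := chain_proj hcE
        simpa using this
      have hKpos : 0 < arcCost γ (x.1 :: (v.map Prod.fst ++ [y.1])) := hcircγ _ hcirc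
      -- cost comparison
      have hcost : arcCost (γE γ) pE' < arcCost (γE γ) (u ++ (x :: (v ++ y :: w))) := by
        rw [arcCost_proj, arcCost_proj]
        have e1 : (pE'.map Prod.fst)
            = u.map Prod.fst ++ y.1 :: w.map Prod.fst := by
          simp [hpE'def, hshiftdef]
        have e2 : ((u ++ (x :: (v ++ y :: w))).map Prod.fst)
            = u.map Prod.fst ++ x.1 :: (v.map Prod.fst ++ y.1 :: w.map Prod.fst) := by
          simp
        rw [e1, e2, hxy]
        rw [arcCost_append y.1 (w.map Prod.fst) (u.map Prod.fst),
            arcCost_append y.1 (v.map Prod.fst ++ y.1 :: w.map Prod.fst) (u.map Prod.fst)]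
        have e3 : arcCost γ (y.1 :: (v.map Prod.fst ++ y.1 :: w.map Prod.fst))
            = arcCost γ ((y.1 :: v.map Prod.fst) ++ [y.1]) + arcCost γ (y.1 :: w.map Prod.fst) := by
          have := arcCost_append (γ := γ) y.1 (w.map Prod.fst) (y.1 :: v.map Prod.fst)
          simpa using this
        rw [e3]
        rw [hxy] at hKpos
        have : arcCost γ ((y.1 :: v.map Prod.fst) ++ [y.1])
            = arcCost γ (y.1 :: (v.map Prod.fst ++ [y.1])) := by simp
        rw [this] at *
        omega
      -- length bound
      have hlen' : pE'.length ≤ n := by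
        simp only [hpE'def, List.length_append, List.length_map, List.length_cons] at hlen ⊢
        omega
      by_cases hnd' : (pE'.map Prod.fst).Nodup
      · exact ⟨pE', tc.2 - δ, by omega,
          ⟨⟨hch', hhead', hlast'⟩, List.Nodup.of_map _ hnd'⟩, hcost⟩
      · obtain ⟨qE, c'', hle'', hpath, hlt⟩ :=
          ih pE' hlen' hch' hhead' (tc.1, tc.2 - δ) hlast' hnd'
        refine ⟨qE, c'', by simp at hle''; omega, ?_, lt_trans hlt hcost⟩
        exact hpath

end Helpers

/-- a directed path in `G_E` from the source copy `(i,0)` to a sink copy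
`(t,c)` projects onto a feasible walk in `G` from `i` to `t` with the same primary
length and secondary cost `c`; if moreover every zero-secondary-cost circuit of `G` has
positive primary length, a shortest such path projects onto a simple path of `G`. -/
theorem expanded_path_projects {V : Type*} (A : V → V → Prop)
    (γ σ : V → V → ℤ) (Cmax : ℤ) (T : Set V) (i t : V) (c : ℤ) (pE : List (V × ℤ))
    (hσ : ∀ a b, A a b → 0 ≤ σ a b)
    (hcircγ : ∀ p, IsCircuit A p → 0 < arcCost γ p)
    (ht : t ∈ T)
    (hc : c ≤ Cmax)
    (hpE : IsPath (ArcE A σ Cmax) (i, 0) (t, c) pE) :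
    (IsWalk A i t (pE.map Prod.fst) ∧
        (∀ q, q <+: pE.map Prod.fst → arcCost σ q ≤ Cmax) ∧
        arcCost (γE γ) pE = arcCost γ (pE.map Prod.fst) ∧
        arcCost σ (pE.map Prod.fst) = c) ∧
      ((∀ p, IsCircuit A p → arcCost σ p = 0 → 0 < arcCost γ p) →
        (∀ t' ∈ T, ∀ c' : ℤ, c' ≤ Cmax → ∀ qE, IsPath (ArcE A σ Cmax) (i, 0) (t', c') qE →
          arcCost (γE γ) pE ≤ arcCost (γE γ) qE) →
        (pE.map Prod.fst).Nodup) := by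
  obtain ⟨⟨hch, hhead, hlast⟩, hndE⟩ := hpE
  obtain ⟨l, rfl⟩ : ∃ l, pE = ((i, (0:ℤ)) : V × ℤ) :: l := by
    cases pE with
    | nil => simp at hhead
    | cons a l =>
        simp only [List.head?_cons, Option.some.injEq] at hhead
        exact ⟨l, by rw [hhead]⟩
  have hne : (((i, (0:ℤ)) : V × ℤ) :: l) ≠ [] := by simp
  have hgl : ((((i, (0:ℤ)) : V × ℤ) :: l).getLast hne) = (t, c) := by
    have h := List.getLast?_eq_getLast hne
    rw [h] at hlast
    exact Option.some.inj hlast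
  have hlev := chainE_levels l ((i, (0:ℤ)) : V × ℤ) hch
  rw [hgl] at hlev
  have hσc : arcCost σ ((((i, (0:ℤ)) : V × ℤ) :: l).map Prod.fst) = c := by
    simpa using hlev.symm
  have hc0 : (0:ℤ) ≤ c := by
    have hm := List.getLast_mem hne
    rw [hgl] at hm
    exact chainE_nonneg hσ hch (le_refl 0) (t, c) hm
  have h0C : (0:ℤ) ≤ Cmax := le_trans hc0 hc
  have hCbound : ∀ z ∈ ((i, (0:ℤ)) : V × ℤ) :: l, z.2 ≤ Cmax := by
    intro z hz
    rcases List.mem_cons.mp hz with rfl | hz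
    · exact h0C
    · exact chainE_le_Cmax l _ hch z hz
  constructor
  · refine ⟨⟨chain_proj hch, by simp, ?_⟩, ?_, arcCost_proj _, hσc⟩
    · rw [List.getLast?_map, List.getLast?_eq_getLast hne, hgl]
      rfl
    · intro q hq
      have hq' : q = List.map Prod.fst (List.take q.length (((i, (0:ℤ)) : V × ℤ) :: l)) := by
        rw [List.map_take]
        exact List.prefix_iff_eq_take.mp hq
      cases hn : q.length with
      | zero =>
          rw [List.length_eq_zero_iff.mp hn]
          simpa [arcCost_nil] using h0C
      | succ m =>
          rw [hq', hn, List.take_succ_cons]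
          have hpre : (((i, (0:ℤ)) : V × ℤ) :: List.take m l) <+: (((i, (0:ℤ)) : V × ℤ) :: l) := by
            rw [← List.take_succ_cons]
            exact List.take_prefix (m + 1) _
          have hchq := hch.prefix hpre
          have hlevq := chainE_levels (List.take m l) ((i, (0:ℤ)) : V × ℤ) hchq
          have hmem : ((((i, (0:ℤ)) : V × ℤ) :: List.take m l).getLast (by simp))
              ∈ ((i, (0:ℤ)) : V × ℤ) :: l := by
            have h1 := List.getLast_mem (l := (((i, (0:ℤ)) : V × ℤ) :: List.take m l)) (by simp)
            exact hpre.subset h1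
          have := hCbound _ hmem
          omega
  · intro _ hopt
    by_contra hnd
    obtain ⟨qE, c', hc', hpath, hlt⟩ :=
      reduce hσ hcircγ i ((((i, (0:ℤ)) : V × ℤ) :: l).length) _ le_rfl hch (by simp)
        (t, c) hlast hnd
    exact absurd (hopt t ht c' (le_trans hc' hc) qE hpath) (not_le.mpr hlt)
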